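/- Let m ≥ 2, let K ≠ 2^[m] be a simplicial complex on [m], and let i ≠ j be elements of [m] with {i,j} ∈ K and {i',j'} ∈ K∨ (i.e., [m]∖{i,j} ∉ K). Then the full subcomplex of Bier(K) on the 4-element set S = {i, j, i', j'} is the 4-cycle with edge set {{i,j}, {j,i'}, {i',j'}, {j',i}}: its faces are exactly ∅, the four singletons of S, and these four 2-element sets. -/

import Mathlib

open Classical

def IsComplex {V : Type*} (K : Set (Finset V)) : Prop :=
  ∅ ∈ K ∧ ∀ σ ∈ K, ∀ τ ⊆ σ, τ ∈ K

def dual {m : ℕ} (K : Set (Finset (Fin m))) : Set (Finset (Fin m)) :=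
  {σ | σᶜ ∉ K}

def inlEmb (m : ℕ) : Fin m ↪ (Fin m ⊕ Fin m) := Function.Embedding.inl

def inrEmb (m : ℕ) : Fin m ↪ (Fin m ⊕ Fin m) := Function.Embedding.inr

/-- The Bier sphere of `K`: faces are `I ∪ J'` with `I ∈ K`, `J ∈ K∨`, `I ∩ J = ∅`,
where the first summand of `Fin m ⊕ Fin m` is `[m]` and the second is the primed copy `[m']`. -/
def bier {m : ℕ} (K : Set (Finset (Fin m))) : Set (Finset (Fin m ⊕ Fin m)) :=
  {τ | ∃ I ∈ K, ∃ J ∈ dual K, Disjoint I J ∧ τ = I.map (inlEmb m) ∪ J.map (inrEmb m)}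

def IsMinNonFace {V : Type*} (K : Set (Finset V)) (σ : Finset V) : Prop :=
  σ ∉ K ∧ ∀ τ ⊂ σ, τ ∈ K

def IsFlag {V : Type*} (K : Set (Finset V)) : Prop :=
  ∀ σ, IsMinNonFace K σ → σ.card ≤ 2

def IsFacet {V : Type*} (K : Set (Finset V)) (σ : Finset V) : Prop :=
  σ ∈ K ∧ ∀ τ ∈ K, σ ⊆ τ → σ = τ

lemma subset_pair_cases {α : Type*} [DecidableEq α] {a b : α} {s : Finset α}
    (h : s ⊆ {a, b}) : s = ∅ ∨ s = {a} ∨ s = {b} ∨ s = {a, b} := by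
  by_cases ha : a ∈ s <;> by_cases hb : b ∈ s
  · right; right; right
    apply Finset.Subset.antisymm h
    intro x hx
    simp only [Finset.mem_insert, Finset.mem_singleton] at hx
    rcases hx with rfl | rfl <;> assumption
  · right; left
    apply Finset.Subset.antisymm
    · intro x hx
      have := h hx
      simp only [Finset.mem_insert, Finset.mem_singleton] at this ⊢
      rcases this with rfl | rfl
      · rfl
      · exact absurd hx hb
    · simpa using ha
  · right; right; left
    apply Finset.Subset.antisymm
    · intro x hx
      have := h hx
      simp only [Finset.mem_insert, Finset.mem_singleton] at this ⊢
      rcases this with rfl | rfl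
      · exact absurd hx ha
      · rfl
    · simpa using hb
  · left
    ext x
    simp only [Finset.notMem_empty, iff_false]
    intro hx
    have := h hx
    simp only [Finset.mem_insert, Finset.mem_singleton] at this
    rcases this with rfl | rfl <;> [exact ha hx; exact hb hx]

theorem bier_full_subcomplex_four_cycle {m : ℕ} (hm : 2 ≤ m)
    (K : Set (Finset (Fin m))) (hK : IsComplex K) (hKne : K ≠ Set.univ)
    (i j : Fin m) (hij : i ≠ j)
    (hedge : ({i, j} : Finset (Fin m)) ∈ K)
    (hdualedge : ({i, j} : Finset (Fin m))ᶜ ∉ K) :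
    ∀ τ : Finset (Fin m ⊕ Fin m),
      (τ ∈ bier K ∧ τ ⊆ {Sum.inl i, Sum.inl j, Sum.inr i, Sum.inr j}) ↔
      (τ = ∅ ∨
       τ = {Sum.inl i} ∨ τ = {Sum.inl j} ∨ τ = {Sum.inr i} ∨ τ = {Sum.inr j} ∨
       τ = {Sum.inl i, Sum.inl j} ∨ τ = {Sum.inl j, Sum.inr i} ∨
       τ = {Sum.inr i, Sum.inr j} ∨ τ = {Sum.inr j, Sum.inl i}) := by
  -- basic membership facts
  have hiK : ({i} : Finset (Fin m)) ∈ K := hK.2 _ hedge _ (by simp)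
  have hjK : ({j} : Finset (Fin m)) ∈ K := hK.2 _ hedge _ (by simp)
  have heK : (∅ : Finset (Fin m)) ∈ K := hK.1
  have huniv : (Finset.univ : Finset (Fin m)) ∉ K := by
    intro h
    apply hKne
    ext σ
    simp only [Set.mem_univ, iff_true]
    exact hK.2 _ h _ (Finset.subset_univ σ)
  have hdual : ∀ J : Finset (Fin m), J ⊆ {i, j} → J ∈ dual K := by
    intro J hJ
    rcases eq_or_ne J ∅ with rfl | hne
    · simpa [dual] using huniv
    · intro hc
      exact hdualedge (hK.2 _ hc _ (by
        rw [Finset.compl_subset_compl]; exact hJ))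
  intro τ
  constructor
  · rintro ⟨⟨I, hI, J, hJ, hdisj, rfl⟩, hsub⟩
    have hIsub : I ⊆ {i, j} := by
      intro x hx
      have : Sum.inl x ∈ ({Sum.inl i, Sum.inl j, Sum.inr i, Sum.inr j} :
          Finset (Fin m ⊕ Fin m)) := hsub (by
        simp only [Finset.mem_union, Finset.mem_map]
        exact Or.inl ⟨x, hx, rfl⟩)
      simp only [Finset.mem_insert, Finset.mem_singleton, Sum.inl.injEq,
        reduceCtorEq, or_false, false_or] at this
      simpa using this
    have hJsub : J ⊆ {i, j} := by
      intro x hx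
      have : Sum.inr x ∈ ({Sum.inl i, Sum.inl j, Sum.inr i, Sum.inr j} :
          Finset (Fin m ⊕ Fin m)) := hsub (by
        simp only [Finset.mem_union, Finset.mem_map]
        exact Or.inr ⟨x, hx, rfl⟩)
      simp only [Finset.mem_insert, Finset.mem_singleton, Sum.inr.injEq,
        reduceCtorEq, or_false, false_or] at this
      simpa using this
    have hId := Finset.disjoint_left.mp hdisj
    rcases subset_pair_cases hIsub with rfl | rfl | rfl | rfl <;>
      rcases subset_pair_cases hJsub with rfl | rfl | rfl | rfl <;>
      simp_all [inlEmb, inrEmb, Finset.map_insert, Finset.ext_iff,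
        Finset.disjoint_left] <;> try tauto
  · have hmk : ∀ I J : Finset (Fin m), I ∈ K → J ⊆ {i, j} → Disjoint I J →
        I.map (inlEmb m) ∪ J.map (inrEmb m) ∈ bier K :=
      fun I J h1 h2 h3 => ⟨I, h1, J, hdual J h2, h3, rfl⟩
    rintro (rfl | rfl | rfl | rfl | rfl | rfl | rfl | rfl | rfl) <;>
      refine ⟨?_, by simp [Finset.insert_subset_iff]⟩
    · have := hmk ∅ ∅ heK (by simp) (by simp)
      simpa [inlEmb, inrEmb] using this
    · have := hmk {i} ∅ hiK (by simp) (by simp)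
      simpa [inlEmb, inrEmb] using this
    · have := hmk {j} ∅ hjK (by simp) (by simp)
      simpa [inlEmb, inrEmb] using this
    · have := hmk ∅ {i} heK (by simp) (by simp)
      simpa [inlEmb, inrEmb] using this
    · have := hmk ∅ {j} heK (by simp) (by simp)
      simpa [inlEmb, inrEmb] using this
    · have := hmk {i, j} ∅ hedge (by simp) (by simp)
      simpa [inlEmb, inrEmb, Finset.map_insert] using this
    · have := hmk {j} {i} hjK (by simp) (by simpa using hij.symm)
      simpa [inlEmb, inrEmb] using this
    · have := hmk ∅ {i, j} heK (by simp) (by simp)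
      simpa [inlEmb, inrEmb, Finset.map_insert] using this
    · have h1 := hmk {i} {j} hiK (by simp) (by simpa using hij)
      have h2 : ({Sum.inr j, Sum.inl i} : Finset (Fin m ⊕ Fin m)) =
          Finset.map (inlEmb m) {i} ∪ Finset.map (inrEmb m) {j} := by
        ext x; simp [inlEmb, inrEmb]; tauto
      rw [h2]; exact h1
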